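/- Let W be a finite-dimensional real vector space and A_W a nonzero algebraic curvature tensor on W such that (W, A_W) is indecomposable (there is no direct sum decomposition W = W₁ ⊕ W₂ with both W₁ and W₂ nonzero such that A_W(a,b,c,d) = 0 unless all four arguments lie in W₁ or all four lie in W₂). Define 𝔐 = (V,⟨·,·⟩,A) with V := W ⊕ W*, ⟨(w₁,ξ₁),(w₂,ξ₂)⟩ := ξ₁(w₂) + ξ₂(w₁), and A((w₁,ξ₁),(w₂,ξ₂),(w₃,ξ₃),(w₄,ξ₄)) := A_W(w₁,w₂,w₃,w₄). Then 𝔐 is indecomposable: there exist no nonzero subspaces V₁, V₂ of V with V = V₁ ⊕ V₂, ⟨v₁,v₂⟩ = 0 for all v₁ ∈ V₁, v₂ ∈ V₂, and A(a,b,c,d) = 0 unless all four arguments lie in V₁ or all four lie in V₂. -/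
import Mathlib


noncomputable section

/-- The Jacobi operator `J(x) : y ↦ 𝒜(y,x)x` of a (tri)linear curvature operator `𝒜`. -/
def jacobiOp {V : Type*} [AddCommGroup V] [Module ℝ V]
    (Aop : V →ₗ[ℝ] V →ₗ[ℝ] V →ₗ[ℝ] V) (x : V) : V →ₗ[ℝ] V where
  toFun y := Aop y x x
  map_add' y z := by simp
  map_smul' c y := by simp

/-- The polarized Jacobi operator `J(x,y) : z ↦ ½(𝒜(z,x)y + 𝒜(z,y)x)`. -/
def jacobiPol {V : Type*} [AddCommGroup V] [Module ℝ V]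
    (Aop : V →ₗ[ℝ] V →ₗ[ℝ] V →ₗ[ℝ] V) (x y : V) : V →ₗ[ℝ] V where
  toFun z := (1/2 : ℝ) • (Aop z x y + Aop z y x)
  map_add' a b := by simp [smul_add]; abel
  map_smul' c a := by simp [smul_add, smul_comm c]

private lemma dual_ext_aux
    {W : Type*} [AddCommGroup W] [Module ℝ W] [FiniteDimensional ℝ W]
    (AW : W →ₗ[ℝ] W →ₗ[ℝ] W →ₗ[ℝ] W →ₗ[ℝ] ℝ)
    (hAWne : AW ≠ 0)
    (hWind : ¬ ∃ W₁ W₂ : Submodule ℝ W, W₁ ≠ ⊥ ∧ W₂ ≠ ⊥ ∧ IsCompl W₁ W₂ ∧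
      (∀ a b c d : W, AW a b c d ≠ 0 →
        (a ∈ W₁ ∧ b ∈ W₁ ∧ c ∈ W₁ ∧ d ∈ W₁) ∨ (a ∈ W₂ ∧ b ∈ W₂ ∧ c ∈ W₂ ∧ d ∈ W₂)))
    (V₁ V₂ : Submodule ℝ (W × Module.Dual ℝ W))
    (h₂ : V₂ ≠ ⊥)
    (horth : ∀ v₁ ∈ V₁, ∀ v₂ ∈ V₂, v₁.2 v₂.1 + v₂.2 v₁.1 = 0)
    (hA : ∀ a b c d : W × Module.Dual ℝ W, AW a.1 b.1 c.1 d.1 ≠ 0 →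
        (a ∈ V₁ ∧ b ∈ V₁ ∧ c ∈ V₁ ∧ d ∈ V₁) ∨ (a ∈ V₂ ∧ b ∈ V₂ ∧ c ∈ V₂ ∧ d ∈ V₂))
    (hS₂ : ∀ w : W, (w, (0 : Module.Dual ℝ W)) ∈ V₂ → w = 0) : False := by
  -- whenever AW a b c d ≠ 0, all of (a,0),...,(d,0) lie in V₁
  have step1 : ∀ a b c d : W, AW a b c d ≠ 0 →
      ((a, (0 : Module.Dual ℝ W)) ∈ V₁ ∧ (b, (0 : Module.Dual ℝ W)) ∈ V₁ ∧
       (c, (0 : Module.Dual ℝ W)) ∈ V₁ ∧ (d, (0 : Module.Dual ℝ W)) ∈ V₁) := by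
    intro a b c d h
    rcases hA (a, 0) (b, 0) (c, 0) (d, 0) h with h' | h'
    · exact h'
    · rw [hS₂ a h'.1] at h
      simp at h
  -- S₁ = {w | (w,0) ∈ V₁}
  set S₁ : Submodule ℝ W := V₁.comap (LinearMap.inl ℝ W (Module.Dual ℝ W)) with hS₁def
  have hmem : ∀ w : W, w ∈ S₁ ↔ (w, (0 : Module.Dual ℝ W)) ∈ V₁ := by
    intro w; rw [hS₁def]; simp [Submodule.mem_comap]
  -- there is a nonzero value of AW
  obtain ⟨a, b, c, d, habcd⟩ : ∃ a b c d : W, AW a b c d ≠ 0 := by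
    by_contra h
    push_neg at h
    apply hAWne
    ext a b c d
    simpa using h a b c d
  have hS₁ne : S₁ ≠ ⊥ := by
    have ha : a ∈ S₁ := (hmem a).mpr (step1 a b c d habcd).1
    have hane : a ≠ 0 := by
      intro h0
      rw [h0] at habcd
      simp at habcd
    exact Submodule.ne_bot_iff S₁ |>.mpr ⟨a, ha, hane⟩
  -- S₁ = ⊤
  have hS₁top : S₁ = ⊤ := by
    by_contra htop
    obtain ⟨D, hD⟩ := Submodule.exists_isCompl S₁
    have hDne : D ≠ ⊥ := by
      intro hDbot
      apply htop
      have := hD.codisjoint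
      rw [hDbot] at this
      exact codisjoint_bot.mp this
    exact hWind ⟨S₁, D, hS₁ne, hDne, hD, fun a b c d h => by
      obtain ⟨ha, hb, hc, hd⟩ := step1 a b c d h
      exact Or.inl ⟨(hmem a).mpr ha, (hmem b).mpr hb, (hmem c).mpr hc, (hmem d).mpr hd⟩⟩
  -- hence V₂ = ⊥, contradiction
  apply h₂
  rw [eq_bot_iff]
  intro v₂ hv₂
  have hxi : v₂.2 = 0 := by
    ext w
    have hw : (w, (0 : Module.Dual ℝ W)) ∈ V₁ := (hmem w).mp (hS₁top ▸ Submodule.mem_top)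
    have := horth (w, 0) hw v₂ hv₂
    simpa using this
  have hv : v₂ = (v₂.1, (0 : Module.Dual ℝ W)) := by
    rw [← hxi]
  have h1 : v₂.1 = 0 := hS₂ v₂.1 (hv ▸ hv₂)
  simp only [Submodule.mem_bot]
  rw [hv, h1]
  rfl

/-- Let `A_W` be a nonzero indecomposable algebraic curvature tensor on
`W`. Then `𝔐 = (W ⊕ W*, ⟨·,·⟩, A)` with `⟨(w₁,ξ₁),(w₂,ξ₂)⟩ = ξ₁(w₂) + ξ₂(w₁)` and
`A((w₁,ξ₁),...,(w₄,ξ₄)) = A_W(w₁,w₂,w₃,w₄)` is indecomposable. -/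
theorem dual_extension_indecomposable
    {W : Type*} [AddCommGroup W] [Module ℝ W] [FiniteDimensional ℝ W]
    -- a nonzero algebraic curvature tensor A_W on W
    (AW : W →ₗ[ℝ] W →ₗ[ℝ] W →ₗ[ℝ] W →ₗ[ℝ] ℝ)
    (hAW1 : ∀ x y z w : W, AW x y z w = - AW y x z w)
    (hAW2 : ∀ x y z w : W, AW x y z w = AW z w x y)
    (hAW3 : ∀ x y z w : W, AW x y z w + AW y z x w + AW z x y w = 0)
    (hAWne : AW ≠ 0)
    -- (W, A_W) is indecomposable
    (hWind : ¬ ∃ W₁ W₂ : Submodule ℝ W, W₁ ≠ ⊥ ∧ W₂ ≠ ⊥ ∧ IsCompl W₁ W₂ ∧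
      (∀ a b c d : W, AW a b c d ≠ 0 →
        (a ∈ W₁ ∧ b ∈ W₁ ∧ c ∈ W₁ ∧ d ∈ W₁) ∨ (a ∈ W₂ ∧ b ∈ W₂ ∧ c ∈ W₂ ∧ d ∈ W₂))) :
    -- 𝔐 is indecomposable
    ¬ ∃ V₁ V₂ : Submodule ℝ (W × Module.Dual ℝ W), V₁ ≠ ⊥ ∧ V₂ ≠ ⊥ ∧ IsCompl V₁ V₂ ∧
      (∀ v₁ ∈ V₁, ∀ v₂ ∈ V₂, v₁.2 v₂.1 + v₂.2 v₁.1 = 0) ∧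
      (∀ a b c d : W × Module.Dual ℝ W, AW a.1 b.1 c.1 d.1 ≠ 0 →
        (a ∈ V₁ ∧ b ∈ V₁ ∧ c ∈ V₁ ∧ d ∈ V₁) ∨ (a ∈ V₂ ∧ b ∈ V₂ ∧ c ∈ V₂ ∧ d ∈ V₂)) := by
  rintro ⟨V₁, V₂, h₁, h₂, hcompl, horth, hA⟩
  -- the two subspaces cannot both contain nonzero vectors of the form (w,0)
  have hdisj : ∀ w : W, (w, (0 : Module.Dual ℝ W)) ∈ V₁ →
      (w, (0 : Module.Dual ℝ W)) ∈ V₂ → w = 0 := by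
    intro w hw1 hw2
    have := Submodule.disjoint_def.mp hcompl.disjoint _ hw1 hw2
    simpa [Prod.ext_iff] using this
  by_cases hb1 : ∀ w : W, (w, (0 : Module.Dual ℝ W)) ∈ V₁ → w = 0
  · exact dual_ext_aux AW hAWne hWind V₂ V₁ h₁
      (fun v₂ hv₂ v₁ hv₁ => by have := horth v₁ hv₁ v₂ hv₂; linarith)
      (fun a b c d h => (hA a b c d h).symm) hb1
  by_cases hb2 : ∀ w : W, (w, (0 : Module.Dual ℝ W)) ∈ V₂ → w = 0
  · exact dual_ext_aux AW hAWne hWind V₁ V₂ h₂ horth hA hb2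
  -- both S₁ and S₂ are nonzero : contradicts indecomposability of W
  push_neg at hb1 hb2
  obtain ⟨w₁, hw₁, hw₁ne⟩ := hb1
  obtain ⟨w₂, hw₂, hw₂ne⟩ := hb2
  set S₁ : Submodule ℝ W := V₁.comap (LinearMap.inl ℝ W (Module.Dual ℝ W)) with hS₁def
  set S₂ : Submodule ℝ W := V₂.comap (LinearMap.inl ℝ W (Module.Dual ℝ W)) with hS₂def
  have hmem1 : ∀ w : W, w ∈ S₁ ↔ (w, (0 : Module.Dual ℝ W)) ∈ V₁ := by
    intro w; rw [hS₁def]; simp [Submodule.mem_comap]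
  have hmem2 : ∀ w : W, w ∈ S₂ ↔ (w, (0 : Module.Dual ℝ W)) ∈ V₂ := by
    intro w; rw [hS₂def]; simp [Submodule.mem_comap]
  obtain ⟨D, hD⟩ := Submodule.exists_isCompl (S₁ ⊔ S₂)
  apply hWind
  refine ⟨S₁ ⊔ D, S₂, ?_, ?_, ⟨?_, ?_⟩, ?_⟩
  · intro hbot
    apply hw₁ne
    have : w₁ ∈ S₁ ⊔ D := le_sup_left (a := S₁) (b := D) ((hmem1 w₁).mpr hw₁)
    rw [hbot] at this
    simpa using this
  · intro hbot
    apply hw₂ne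
    have : w₂ ∈ S₂ := (hmem2 w₂).mpr hw₂
    rw [hbot] at this
    simpa using this
  · -- Disjoint (S₁ ⊔ D) S₂
    rw [Submodule.disjoint_def]
    intro x hx hx2
    obtain ⟨s, hs, e, he, hse⟩ := Submodule.mem_sup.mp hx
    have hes : e = x - s := by rw [← hse]; abel
    have he2 : e ∈ S₁ ⊔ S₂ := by
      rw [hes]
      exact Submodule.sub_mem _ (le_sup_right (a := S₁) hx2) (le_sup_left (b := S₂) hs)
    have he0 : e = 0 := Submodule.disjoint_def.mp hD.disjoint e he2 he
    have hxs : x = s := by rw [← hse, he0, add_zero]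
    rw [hxs]
    exact hdisj s ((hmem1 s).mp hs) ((hmem2 s).mp (hxs ▸ hx2))
  · -- Codisjoint (S₁ ⊔ D) S₂
    rw [codisjoint_iff]
    have := codisjoint_iff.mp hD.codisjoint
    rw [sup_right_comm]
    exact this
  · intro a b c d h
    rcases hA (a, 0) (b, 0) (c, 0) (d, 0) h with ⟨ha, hb, hc, hd⟩ | ⟨ha, hb, hc, hd⟩
    · exact Or.inl ⟨le_sup_left (b := D) ((hmem1 a).mpr ha),
        le_sup_left (b := D) ((hmem1 b).mpr hb),
        le_sup_left (b := D) ((hmem1 c).mpr hc),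
        le_sup_left (b := D) ((hmem1 d).mpr hd)⟩
    · exact Or.inr ⟨(hmem2 a).mpr ha, (hmem2 b).mpr hb, (hmem2 c).mpr hc, (hmem2 d).mpr hd⟩
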